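/- arXiv:2501.11139 — 2 statements merged into one kernel-verified Lean document; each statement's English description precedes it below -/
import Mathlib

section
/- Let μ1 ≠ μ2 ∈ ℝ^d. Then min over probability densities q of max{KL(q ‖ p1), KL(q ‖ p2)} equals ‖μ1 − μ2‖₂²/8, where p_i is the density of N(μ_i, I_d), and the minimum is attained by the density of N((μ1+μ2)/2, I_d). -/
open MeasureTheory Real

noncomputable def gaussianPdf {d : ℕ} (μ : EuclideanSpace ℝ (Fin d)) (x : EuclideanSpace ℝ (Fin d)) : ℝ :=
  (2 * Real.pi) ^ (-(d : ℝ) / 2) * Real.exp (-‖x - μ‖ ^ 2 / 2)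

noncomputable def klCont {d : ℕ} (q p : EuclideanSpace ℝ (Fin d) → ℝ) : ℝ :=
  ∫ x, q x * Real.log (q x / p x)

namespace GaussAux

variable {d : ℕ}

local notation "E" => EuclideanSpace ℝ (Fin d)

lemma pdf_pos (μ x : E) : 0 < gaussianPdf μ x := by
  unfold gaussianPdf; positivity

lemma integrable_exp_norm_sq {b : ℝ} (hb : 0 < b) :
    Integrable (fun x : E => rexp (-b * ‖x‖ ^ 2)) := by
  have h := (GaussianFourier.integrable_cexp_neg_mul_sq_norm_add (V := E)
      (b := (b : ℂ)) (by simpa using hb) 0 (0 : E)).norm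
  refine h.congr (Filter.Eventually.of_forall fun x => ?_)
  simp only [Complex.norm_exp]
  congr 1
  have hcast : (-(b:ℂ) * (‖x‖:ℂ) ^ 2 + 0 * ((inner ℝ (0:E) x : ℝ) : ℂ))
      = ((-b * ‖x‖ ^ 2 : ℝ) : ℂ) := by push_cast; ring
  rw [hcast, Complex.ofReal_re]

lemma gaussian_translate (μ x : E) :
    gaussianPdf μ x = ((2 * π) ^ (-(d : ℝ) / 2)) * rexp (-(1/2) * ‖x - μ‖ ^ 2) := by
  unfold gaussianPdf
  ring_nf

lemma integral_gaussianPdf (μ : E) : ∫ x, gaussianPdf μ x = 1 := by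
  simp only [gaussian_translate]
  rw [integral_const_mul]
  have h1 : (∫ x : E, rexp (-(1/2) * ‖x - μ‖ ^ 2))
      = ∫ x : E, rexp (-(1/2) * ‖x‖ ^ 2) :=
    integral_sub_right_eq_self (fun y : E => rexp (-(1/2) * ‖y‖ ^ 2)) μ
  rw [h1, GaussianFourier.integral_rexp_neg_mul_sq_norm (by norm_num : (0:ℝ) < 1/2)]
  rw [finrank_euclideanSpace_fin]
  have h2 : π / (1/2 : ℝ) = 2 * π := by ring
  rw [h2, ← Real.rpow_add (by positivity)]
  rw [show (-(d:ℝ)/2 + (d:ℝ)/2) = 0 by ring, Real.rpow_zero]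

lemma integrable_gaussianPdf (μ : E) : Integrable (gaussianPdf μ) := by
  have : gaussianPdf μ = fun x : E =>
      ((2 * π) ^ (-(d : ℝ) / 2)) * rexp (-(1/2) * ‖x - μ‖ ^ 2) := by
    funext x; exact gaussian_translate μ x
  rw [this]
  exact ((integrable_exp_norm_sq (by norm_num : (0:ℝ) < 1/2)).comp_sub_right μ).const_mul _

lemma integral_gaussian_inner (ν w : E) :
    ∫ x : E, gaussianPdf ν x * (inner ℝ (x - ν) w : ℝ) = 0 := by
  have h1 : (∫ x : E, gaussianPdf ν x * (inner ℝ (x - ν) w : ℝ))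
      = ∫ y : E, gaussianPdf 0 y * (inner ℝ y w : ℝ) := by
    rw [← integral_sub_right_eq_self (fun y : E => gaussianPdf 0 y * (inner ℝ y w : ℝ)) ν]
    congr 1; funext x
    simp [gaussianPdf]
  rw [h1]
  have h2 : (∫ y : E, gaussianPdf 0 y * (inner ℝ y w : ℝ))
      = ∫ y : E, gaussianPdf 0 (-y) * (inner ℝ (-y) w : ℝ) :=
    (integral_neg_eq_self (fun y : E => gaussianPdf 0 y * (inner ℝ y w : ℝ)) volume).symm
  have h3 : (∫ y : E, gaussianPdf 0 (-y) * (inner ℝ (-y) w : ℝ))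
      = - ∫ y : E, gaussianPdf 0 y * (inner ℝ y w : ℝ) := by
    rw [← integral_neg]
    congr 1; funext y
    simp only [gaussianPdf, inner_neg_left, norm_neg, neg_mul, mul_neg, sub_zero]
  linarith [h2, h3]

lemma integrable_gaussian_inner (ν w : E) :
    Integrable (fun x : E => gaussianPdf ν x * (inner ℝ (x - ν) w : ℝ)) := by
  have hc : Continuous fun x : E => gaussianPdf ν x * (inner ℝ (x - ν) w : ℝ) := by
    unfold gaussianPdf
    have h1 : Continuous fun x : E => ‖x - ν‖ ^ 2 := by fun_prop
    exact (continuous_const.mul (Real.continuous_exp.comp (h1.neg.div_const 2))).mul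
      ((continuous_id.sub continuous_const).inner continuous_const)
  apply Integrable.mono'
      (g := fun x : E => ((2 * π) ^ (-(d : ℝ) / 2) * ‖w‖ * rexp 1) * rexp (-(1/4) * ‖x - ν‖ ^ 2))
      (((integrable_exp_norm_sq (by norm_num : (0:ℝ) < 1/4)).comp_sub_right ν).const_mul _)
      hc.aestronglyMeasurable
  filter_upwards with x
  set t := ‖x - ν‖ with ht
  have ht0 : 0 ≤ t := norm_nonneg _
  have hC : (0:ℝ) < (2 * π) ^ (-(d : ℝ) / 2) := by positivity
  have hinner : |(inner ℝ (x - ν) w : ℝ)| ≤ t * ‖w‖ := by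
    rw [ht]; exact abs_real_inner_le_norm _ _
  have hkey : t * rexp (-(1/2) * t ^ 2) ≤ rexp 1 * rexp (-(1/4) * t ^ 2) := by
    rw [← Real.exp_add]
    have h5 : t ≤ rexp (1 + (1/4) * t ^ 2) := by
      have h6 := Real.add_one_le_exp (1/4 * t ^ 2 : ℝ)
      have h7 : t ≤ 1 + (1/4) * t ^ 2 := by nlinarith [sq_nonneg (t - 2)]
      have h8 : (1 : ℝ) + (1/4) * t ^ 2 ≤ rexp (1 + (1/4) * t ^ 2) := by
        linarith [Real.add_one_le_exp (1 + (1/4) * t ^ 2 : ℝ)]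
      linarith
    calc t * rexp (-(1/2) * t ^ 2) ≤ rexp (1 + (1/4) * t ^ 2) * rexp (-(1/2) * t ^ 2) := by
          apply mul_le_mul_of_nonneg_right h5 (Real.exp_pos _).le
      _ = rexp (1 + -(1/4) * t ^ 2) := by rw [← Real.exp_add]; ring_nf
  have hpdf : gaussianPdf ν x = (2 * π) ^ (-(d : ℝ) / 2) * rexp (-(1/2) * t ^ 2) := by
    rw [gaussian_translate]
  rw [norm_mul, hpdf]
  have h9 : ‖(2 * π) ^ (-(d : ℝ) / 2) * rexp (-(1/2) * t ^ 2)‖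
      = (2 * π) ^ (-(d : ℝ) / 2) * rexp (-(1/2) * t ^ 2) := by
    rw [Real.norm_eq_abs, abs_of_pos (by positivity)]
  rw [h9, Real.norm_eq_abs]
  calc (2 * π) ^ (-(d : ℝ) / 2) * rexp (-(1/2) * t ^ 2) * |(inner ℝ (x - ν) w : ℝ)|
      ≤ (2 * π) ^ (-(d : ℝ) / 2) * rexp (-(1/2) * t ^ 2) * (t * ‖w‖) := by
        apply mul_le_mul_of_nonneg_left hinner (by positivity)
    _ = (2 * π) ^ (-(d : ℝ) / 2) * ‖w‖ * (t * rexp (-(1/2) * t ^ 2)) := by ring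
    _ ≤ (2 * π) ^ (-(d : ℝ) / 2) * ‖w‖ * (rexp 1 * rexp (-(1/4) * t ^ 2)) := by
        apply mul_le_mul_of_nonneg_left hkey (by positivity)
    _ = (2 * π) ^ (-(d : ℝ) / 2) * ‖w‖ * rexp 1 * rexp (-(1/4) * ‖x - ν‖ ^ 2) := by
        rw [ht]; ring

lemma kl_gaussian (ν μ : E) :
    klCont (gaussianPdf ν) (gaussianPdf μ) = ‖ν - μ‖ ^ 2 / 2 := by
  unfold klCont
  have hpt : ∀ x : E, gaussianPdf ν x * Real.log (gaussianPdf ν x / gaussianPdf μ x)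
      = gaussianPdf ν x * (inner ℝ (x - ν) (ν - μ) : ℝ) + (‖ν - μ‖ ^ 2 / 2) * gaussianPdf ν x := by
    intro x
    have hratio : gaussianPdf ν x / gaussianPdf μ x
        = rexp ((‖x - μ‖ ^ 2 - ‖x - ν‖ ^ 2) / 2) := by
      unfold gaussianPdf
      rw [mul_div_mul_left _ _ (by positivity : ((2:ℝ) * π) ^ (-(d : ℝ) / 2) ≠ 0),
        ← Real.exp_sub]
      ring_nf
    rw [hratio, Real.log_exp]
    have hexp : (‖x - μ‖ ^ 2 - ‖x - ν‖ ^ 2) / 2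
        = (inner ℝ (x - ν) (ν - μ) : ℝ) + ‖ν - μ‖ ^ 2 / 2 := by
      have h1 : x - μ = (x - ν) + (ν - μ) := by abel
      rw [h1, norm_add_sq_real]
      ring
    rw [hexp]; ring
  simp only [hpt]
  rw [integral_add (integrable_gaussian_inner ν (ν - μ))
      ((integrable_gaussianPdf ν).const_mul _),
    integral_gaussian_inner, integral_const_mul, integral_gaussianPdf]
  ring

lemma midpoint_norm (μ1 μ2 x : E) :
    ‖x - μ1‖ ^ 2 + ‖x - μ2‖ ^ 2
      = 2 * ‖x - (1/2 : ℝ) • (μ1 + μ2)‖ ^ 2 + ‖μ1 - μ2‖ ^ 2 / 2 := by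
  set m : E := (1/2 : ℝ) • (μ1 + μ2) with hm
  have h1 : x - μ1 = (x - m) + (m - μ1) := by abel
  have h2 : x - μ2 = (x - m) + (-(m - μ1)) := by
    have : m - μ2 = -(m - μ1) := by rw [hm]; module
    rw [← this]; abel
  have h4 : ‖m - μ1‖ = ‖μ1 - μ2‖ / 2 := by
    have h5 : m - μ1 = (-(1/2) : ℝ) • (μ1 - μ2) := by rw [hm]; module
    rw [h5, norm_smul]
    simp
    ring
  rw [h1, h2, norm_add_sq_real, norm_add_sq_real, inner_neg_right, norm_neg, h4]
  ring

end GaussAux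

open GaussAux

/-- The minimum over probability densities `q` of `max{KL(q‖p1), KL(q‖p2)}` equals
`‖μ1 − μ2‖²/8`, attained by the density of `N((μ1+μ2)/2, I_d)`. -/
theorem gaussian_minimax_kl {d : ℕ} (μ1 μ2 : EuclideanSpace ℝ (Fin d)) (hne : μ1 ≠ μ2) :
    (∀ q : EuclideanSpace ℝ (Fin d) → ℝ, (∀ x, 0 ≤ q x) → (∫ x, q x) = 1 →
      Integrable (fun x => q x * Real.log (q x / gaussianPdf μ1 x)) →
      Integrable (fun x => q x * Real.log (q x / gaussianPdf μ2 x)) →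
      ‖μ1 - μ2‖ ^ 2 / 8 ≤ max (klCont q (gaussianPdf μ1)) (klCont q (gaussianPdf μ2))) ∧
    max (klCont (gaussianPdf ((1 / 2 : ℝ) • (μ1 + μ2))) (gaussianPdf μ1))
        (klCont (gaussianPdf ((1 / 2 : ℝ) • (μ1 + μ2))) (gaussianPdf μ2))
      = ‖μ1 - μ2‖ ^ 2 / 8 := by
  constructor
  · intro q hq0 hq1 hI1 hI2
    set m : EuclideanSpace ℝ (Fin d) := (1/2 : ℝ) • (μ1 + μ2) with hm
    have hqint : Integrable q := by
      by_contra h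
      rw [integral_undef h] at hq1
      norm_num at hq1
    set c : ℝ := ‖μ1 - μ2‖ ^ 2 / 4 with hc
    have hpt : ∀ x, q x * Real.log (q x / gaussianPdf m x)
        = (q x * Real.log (q x / gaussianPdf μ1 x)
          + q x * Real.log (q x / gaussianPdf μ2 x) - c * q x) / 2 := by
      intro x
      rcases eq_or_lt_of_le (hq0 x) with h0 | h0
      · rw [← h0]; simp
      · have hp1 := pdf_pos μ1 x
        have hp2 := pdf_pos μ2 x
        have hpm := pdf_pos m x
        rw [Real.log_div h0.ne' hp1.ne', Real.log_div h0.ne' hp2.ne',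
          Real.log_div h0.ne' hpm.ne']
        have hlog : Real.log (gaussianPdf μ1 x) + Real.log (gaussianPdf μ2 x)
            = 2 * Real.log (gaussianPdf m x) - c := by
          unfold gaussianPdf
          rw [Real.log_mul (by positivity) (Real.exp_pos _).ne',
            Real.log_mul (by positivity) (Real.exp_pos _).ne',
            Real.log_mul (by positivity) (Real.exp_pos _).ne',
            Real.log_exp, Real.log_exp, Real.log_exp]
          have hpar := midpoint_norm μ1 μ2 x
          rw [hc, ← hm] at *
          linarith [hpar]
        linear_combination (q x / 2) * hlog
    have hmint : Integrable (fun x => q x * Real.log (q x / gaussianPdf m x)) := by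
      have heq : (fun x => q x * Real.log (q x / gaussianPdf m x))
          = fun x => (q x * Real.log (q x / gaussianPdf μ1 x)
            + q x * Real.log (q x / gaussianPdf μ2 x) - c * q x) / 2 := funext hpt
      rw [heq]
      exact ((hI1.add hI2).sub (hqint.const_mul c)).div_const 2
    have hlow : ∀ x, q x - gaussianPdf m x ≤ q x * Real.log (q x / gaussianPdf m x) := by
      intro x
      rcases eq_or_lt_of_le (hq0 x) with h0 | h0
      · rw [← h0]; simp [(pdf_pos m x).le]
      · have hpm := pdf_pos m x
        have h := Real.log_le_sub_one_of_pos (div_pos hpm h0)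
        have hloginv : Real.log (q x / gaussianPdf m x)
            = - Real.log (gaussianPdf m x / q x) := by
          rw [← Real.log_inv, inv_div]
        rw [hloginv]
        have hcancel : gaussianPdf m x / q x * q x = gaussianPdf m x :=
          div_mul_cancel₀ _ h0.ne'
        nlinarith [h, h0, hcancel]
    have hint0 : 0 ≤ ∫ x, q x * Real.log (q x / gaussianPdf m x) := by
      have h1 : (∫ x, (q x - gaussianPdf m x))
          ≤ ∫ x, q x * Real.log (q x / gaussianPdf m x) :=
        integral_mono (hqint.sub (integrable_gaussianPdf m)) hmint hlow
      rw [integral_sub hqint (integrable_gaussianPdf m), hq1, integral_gaussianPdf] at h1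
      linarith
    have heq2 : (∫ x, q x * Real.log (q x / gaussianPdf m x))
        = (klCont q (gaussianPdf μ1) + klCont q (gaussianPdf μ2) - c) / 2 := by
      unfold klCont
      simp only [hpt]
      have hIsum : Integrable (fun x => q x * Real.log (q x / gaussianPdf μ1 x)
          + q x * Real.log (q x / gaussianPdf μ2 x)) := hI1.add hI2
      have hIc : Integrable (fun x => c * q x) := hqint.const_mul c
      rw [integral_div, integral_sub hIsum hIc, integral_add hI1 hI2,
        integral_const_mul, hq1, mul_one]
    rw [heq2] at hint0
    have hmax1 : klCont q (gaussianPdf μ1)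
        ≤ max (klCont q (gaussianPdf μ1)) (klCont q (gaussianPdf μ2)) := le_max_left _ _
    have hmax2 : klCont q (gaussianPdf μ2)
        ≤ max (klCont q (gaussianPdf μ1)) (klCont q (gaussianPdf μ2)) := le_max_right _ _
    rw [hc] at hint0
    linarith
  · have h1 : klCont (gaussianPdf ((1 / 2 : ℝ) • (μ1 + μ2))) (gaussianPdf μ1)
        = ‖μ1 - μ2‖ ^ 2 / 8 := by
      rw [kl_gaussian]
      have h : (1 / 2 : ℝ) • (μ1 + μ2) - μ1 = (-(1/2) : ℝ) • (μ1 - μ2) := by module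
      rw [h, norm_smul]
      simp
      ring
    have h2 : klCont (gaussianPdf ((1 / 2 : ℝ) • (μ1 + μ2))) (gaussianPdf μ2)
        = ‖μ1 - μ2‖ ^ 2 / 8 := by
      rw [kl_gaussian]
      have h : (1 / 2 : ℝ) • (μ1 + μ2) - μ2 = ((1/2) : ℝ) • (μ1 - μ2) := by module
      rw [h, norm_smul]
      simp
      ring
    rw [h1, h2, max_self]
end

section
/- Let p, q be strictly positive probability vectors on {0,1,…,L} with p ≠ q. Then min over probability vectors r of max{KL(r ‖ p), KL(r ‖ q)} equals max_{t ∈ [0,1]} (−log Σ_l p_l^{1−t} q_l^t), the Chernoff information between p and q. -/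
open Real

noncomputable def klDisc {m : ℕ} (r p : Fin m → ℝ) : ℝ :=
  ∑ l, r l * Real.log (r l / p l)

lemma gibbs {L : ℕ} (r u : Fin (L + 1) → ℝ) (hr : ∀ l, 0 ≤ r l)
    (hr1 : ∑ l, r l = 1) (hu : ∀ l, 0 < u l) :
    -Real.log (∑ l, u l) ≤ ∑ l, r l * Real.log (r l / u l) := by
  set S := ∑ l, u l with hSdef
  have hS : 0 < S := Finset.sum_pos (fun l _ => hu l) Finset.univ_nonempty
  have key : ∀ l, r l * Real.log (u l / (r l * S)) ≤ u l / S - r l := by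
    intro l
    rcases eq_or_lt_of_le (hr l) with h | h
    · rw [← h]
      simp only [zero_mul, sub_zero]
      exact div_nonneg (hu l).le hS.le
    · have hx : 0 < u l / (r l * S) := div_pos (hu l) (mul_pos h hS)
      calc r l * Real.log (u l / (r l * S)) ≤ r l * (u l / (r l * S) - 1) :=
            mul_le_mul_of_nonneg_left (Real.log_le_sub_one_of_pos hx) (hr l)
        _ = u l / S - r l := by field_simp
  have h1 : ∑ l, r l * Real.log (u l / (r l * S)) ≤ 0 := by
    calc ∑ l, r l * Real.log (u l / (r l * S)) ≤ ∑ l, (u l / S - r l) :=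
          Finset.sum_le_sum (fun l _ => key l)
      _ = (∑ l, u l) / S - ∑ l, r l := by rw [Finset.sum_sub_distrib, Finset.sum_div]
      _ = 0 := by rw [← hSdef, div_self hS.ne', hr1, sub_self]
  have h2 : ∀ l, r l * Real.log (u l / (r l * S))
      = -(r l * Real.log (r l / u l)) - r l * Real.log S := by
    intro l
    rcases eq_or_lt_of_le (hr l) with h | h
    · rw [← h]; ring
    · rw [Real.log_div (hu l).ne' (mul_pos h hS).ne', Real.log_mul h.ne' hS.ne',
        Real.log_div h.ne' (hu l).ne']
      ring
  have h3 : ∑ l, r l * Real.log (u l / (r l * S))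
      = -(∑ l, r l * Real.log (r l / u l)) - Real.log S := by
    rw [Finset.sum_congr rfl (fun l _ => h2 l), Finset.sum_sub_distrib, Finset.sum_neg_distrib,
      ← Finset.sum_mul, hr1, one_mul]
  rw [h3] at h1
  linarith

/-- `min_r max{KL(r‖p), KL(r‖q)}` over probability vectors `r` equals the Chernoff
information `max_{t∈[0,1]} (−log Σ_l p_l^{1−t} q_l^t)`. -/
theorem minimax_kl_eq_chernoff {L : ℕ} (p q : Fin (L + 1) → ℝ)
    (hp : ∀ l, 0 < p l) (hq : ∀ l, 0 < q l)
    (hp1 : ∑ l, p l = 1) (hq1 : ∑ l, q l = 1) (hne : p ≠ q) :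
    sInf {x : ℝ | ∃ r : Fin (L + 1) → ℝ, (∀ l, 0 ≤ r l) ∧ (∑ l, r l = 1) ∧
        x = max (klDisc r p) (klDisc r q)}
      = sSup {x : ℝ | ∃ t ∈ Set.Icc (0 : ℝ) 1,
          x = -Real.log (∑ l, p l ^ (1 - t) * q l ^ t)} := by
  classical
  set c : Fin (L + 1) → ℝ := fun l => Real.log (q l) - Real.log (p l) with hc
  set Z : ℝ → ℝ := fun t => ∑ l, p l ^ (1 - t) * q l ^ t with hZ
  have hterm : ∀ (t : ℝ) l, p l ^ (1 - t) * q l ^ t = p l * Real.exp (t * c l) := by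
    intro t l
    rw [Real.rpow_def_of_pos (hp l), Real.rpow_def_of_pos (hq l), ← Real.exp_add,
      show p l * Real.exp (t * c l) = Real.exp (Real.log (p l) + t * c l) by
        rw [Real.exp_add, Real.exp_log (hp l)]]
    congr 1
    simp only [hc]
    ring
  have hZpos : ∀ t, 0 < Z t := fun t =>
    Finset.sum_pos (fun l _ => mul_pos (Real.rpow_pos_of_pos (hp l) _)
      (Real.rpow_pos_of_pos (hq l) _)) Finset.univ_nonempty
  have hZalt : ∀ t, Z t = ∑ l, p l * Real.exp (t * c l) := fun t =>
    Finset.sum_congr rfl (fun l _ => hterm t l)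
  have hZfun : Z = fun t => ∑ l, p l * Real.exp (t * c l) := funext hZalt
  have hZderiv : ∀ t, HasDerivAt Z (∑ l, p l * c l * Real.exp (t * c l)) t := by
    intro t
    rw [hZfun]
    apply HasDerivAt.fun_sum
    intro l _
    have h1 : HasDerivAt (fun s : ℝ => s * c l) (c l) t := by
      simpa using (hasDerivAt_id t).mul_const (c l)
    have h2 := (h1.exp).const_mul (p l)
    exact h2.congr_deriv (by ring)
  have hZcont : Continuous Z := by
    rw [continuous_iff_continuousAt]
    exact fun t => (hZderiv t).continuousAt
  set g : ℝ → ℝ := fun t => -Real.log (Z t) with hg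
  have hgcont : Continuous g := (hZcont.log (fun t => (hZpos t).ne')).neg
  have hZ0 : Z 0 = 1 := by
    simp only [hZ]
    norm_num [Real.rpow_one, Real.rpow_zero]
    exact hp1
  have hZ1 : Z 1 = 1 := by
    simp only [hZ]
    norm_num [Real.rpow_one, Real.rpow_zero]
    exact hq1
  -- Z (1/2) < 1
  obtain ⟨l₀, hl₀⟩ : ∃ l, p l ≠ q l := by
    by_contra h
    push_neg at h
    exact hne (funext h)
  have hZhalf : Z (1 / 2) < 1 := by
    have hle : ∀ l, p l ^ (1 - (1:ℝ)/2) * q l ^ ((1:ℝ)/2) ≤ (p l + q l) / 2 := by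
      intro l
      rw [show (1 - (1:ℝ)/2) = 1/2 by norm_num, ← Real.sqrt_eq_rpow, ← Real.sqrt_eq_rpow]
      nlinarith [sq_nonneg (Real.sqrt (p l) - Real.sqrt (q l)), Real.sq_sqrt (hp l).le,
        Real.sq_sqrt (hq l).le, Real.sqrt_nonneg (p l), Real.sqrt_nonneg (q l)]
    have hlt : p l₀ ^ (1 - (1:ℝ)/2) * q l₀ ^ ((1:ℝ)/2) < (p l₀ + q l₀) / 2 := by
      rw [show (1 - (1:ℝ)/2) = 1/2 by norm_num, ← Real.sqrt_eq_rpow, ← Real.sqrt_eq_rpow]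
      have hs : Real.sqrt (p l₀) ≠ Real.sqrt (q l₀) := fun h =>
        hl₀ ((Real.sqrt_inj (hp l₀).le (hq l₀).le).mp h)
      have h2 : 0 < (Real.sqrt (p l₀) - Real.sqrt (q l₀)) ^ 2 :=
        lt_of_le_of_ne (sq_nonneg _) (Ne.symm (pow_ne_zero 2 (sub_ne_zero.mpr hs)))
      nlinarith [Real.sq_sqrt (hp l₀).le, Real.sq_sqrt (hq l₀).le]
    calc Z (1/2) < ∑ l, (p l + q l) / 2 :=
          Finset.sum_lt_sum (fun l _ => hle l) ⟨l₀, Finset.mem_univ _, hlt⟩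
      _ = 1 := by rw [← Finset.sum_div, Finset.sum_add_distrib, hp1, hq1]; norm_num
  have hghalf : 0 < g (1 / 2) := neg_pos.mpr (Real.log_neg (hZpos _) hZhalf)
  -- maximizer of g on [0,1]
  obtain ⟨t₀, ht₀mem, ht₀max⟩ :=
    isCompact_Icc.exists_isMaxOn (Set.nonempty_Icc.mpr zero_le_one) hgcont.continuousOn
  have hmax : ∀ t ∈ Set.Icc (0:ℝ) 1, g t ≤ g t₀ := fun t ht => ht₀max ht
  have hgt₀pos : 0 < g t₀ := lt_of_lt_of_le hghalf (hmax (1/2) (by norm_num))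
  have hg0 : g 0 = 0 := by simp [hg, hZ0]
  have hg1 : g 1 = 0 := by simp [hg, hZ1]
  have ht₀Ioo : t₀ ∈ Set.Ioo (0:ℝ) 1 := by
    rcases ht₀mem with ⟨h0, h1⟩
    constructor
    · rcases h0.lt_or_eq with h | h
      · exact h
      · exfalso; rw [← h, hg0] at hgt₀pos; exact lt_irrefl 0 hgt₀pos
    · rcases h1.lt_or_eq with h | h
      · exact h
      · exfalso; rw [h, hg1] at hgt₀pos; exact lt_irrefl 0 hgt₀pos
  -- derivative of g vanishes at t₀
  have hglocal : IsLocalMax g t₀ := ht₀max.isLocalMax (Icc_mem_nhds ht₀Ioo.1 ht₀Ioo.2)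
  have hgd : HasDerivAt g (-((∑ l, p l * c l * Real.exp (t₀ * c l)) / Z t₀)) t₀ :=
    (((hZderiv t₀).log (hZpos t₀).ne')).neg
  have hD : (∑ l, p l * c l * Real.exp (t₀ * c l)) = 0 := by
    have h := hglocal.deriv_eq_zero
    rw [hgd.deriv, neg_eq_zero, div_eq_zero_iff] at h
    exact h.resolve_right (hZpos t₀).ne'
  -- the optimal r
  set r : Fin (L + 1) → ℝ := fun l => (p l ^ (1 - t₀) * q l ^ t₀) / Z t₀ with hr
  have hrnn : ∀ l, 0 ≤ r l := fun l =>
    div_nonneg (mul_nonneg (Real.rpow_pos_of_pos (hp l) _).le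
      (Real.rpow_pos_of_pos (hq l) _).le) (hZpos t₀).le
  have hrsum : ∑ l, r l = 1 := by
    simp only [hr]
    rw [← Finset.sum_div]
    exact div_self (hZpos t₀).ne'
  have hq' : ∀ l, q l = p l * Real.exp (c l) := by
    intro l
    have := hterm 1 l
    simpa using this
  have hsum_rc : ∑ l, r l * c l = 0 := by
    have he : ∀ l, r l * c l = (p l * c l * Real.exp (t₀ * c l)) / Z t₀ := by
      intro l
      simp only [hr]
      rw [hterm t₀ l]
      ring
    rw [Finset.sum_congr rfl (fun l _ => he l), ← Finset.sum_div, hD, zero_div]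
  have hlogrp : ∀ l, Real.log (r l / p l) = t₀ * c l - Real.log (Z t₀) := by
    intro l
    have h : r l / p l = Real.exp (t₀ * c l) / Z t₀ := by
      simp only [hr]
      rw [hterm t₀ l, div_right_comm, mul_div_cancel_left₀ _ (hp l).ne']
    rw [h, Real.log_div (Real.exp_ne_zero _) (hZpos t₀).ne', Real.log_exp]
  have hlogrq : ∀ l, Real.log (r l / q l) = (t₀ - 1) * c l - Real.log (Z t₀) := by
    intro l
    have e1 : p l * Real.exp (t₀ * c l) = q l * Real.exp ((t₀ - 1) * c l) := by
      rw [hq' l, mul_assoc, ← Real.exp_add]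
      congr 2
      ring
    have h : r l / q l = Real.exp ((t₀ - 1) * c l) / Z t₀ := by
      simp only [hr]
      rw [hterm t₀ l, e1, div_right_comm, mul_div_cancel_left₀ _ (hq l).ne']
    rw [h, Real.log_div (Real.exp_ne_zero _) (hZpos t₀).ne', Real.log_exp]
  have hKLp : klDisc r p = g t₀ := by
    unfold klDisc
    calc ∑ l, r l * Real.log (r l / p l)
        = ∑ l, (t₀ * (r l * c l) - r l * Real.log (Z t₀)) := by
          apply Finset.sum_congr rfl
          intro l _
          rw [hlogrp l]
          ring
      _ = t₀ * (∑ l, r l * c l) - (∑ l, r l) * Real.log (Z t₀) := by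
          rw [Finset.sum_sub_distrib, ← Finset.mul_sum, ← Finset.sum_mul]
      _ = g t₀ := by rw [hsum_rc, hrsum, mul_zero, one_mul, zero_sub]
  have hKLq : klDisc r q = g t₀ := by
    unfold klDisc
    calc ∑ l, r l * Real.log (r l / q l)
        = ∑ l, ((t₀ - 1) * (r l * c l) - r l * Real.log (Z t₀)) := by
          apply Finset.sum_congr rfl
          intro l _
          rw [hlogrq l]
          ring
      _ = (t₀ - 1) * (∑ l, r l * c l) - (∑ l, r l) * Real.log (Z t₀) := by
          rw [Finset.sum_sub_distrib, ← Finset.mul_sum, ← Finset.sum_mul]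
      _ = g t₀ := by rw [hsum_rc, hrsum, mul_zero, one_mul, zero_sub]
  -- lower bound for all feasible r'
  have hcombo : ∀ r' : Fin (L + 1) → ℝ, (∀ l, 0 ≤ r' l) → (∑ l, r' l = 1) →
      g t₀ ≤ max (klDisc r' p) (klDisc r' q) := by
    intro r' hnn hsum
    set u : Fin (L + 1) → ℝ := fun l => p l ^ (1 - t₀) * q l ^ t₀ with hu
    have hupos : ∀ l, 0 < u l := fun l =>
      mul_pos (Real.rpow_pos_of_pos (hp l) _) (Real.rpow_pos_of_pos (hq l) _)
    have hgibbs := gibbs r' u hnn hsum hupos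
    have hdecomp : ∑ l, r' l * Real.log (r' l / u l)
        = (1 - t₀) * klDisc r' p + t₀ * klDisc r' q := by
      unfold klDisc
      rw [Finset.mul_sum, Finset.mul_sum, ← Finset.sum_add_distrib]
      apply Finset.sum_congr rfl
      intro l _
      rcases eq_or_lt_of_le (hnn l) with h | h
      · rw [← h]; ring
      · rw [Real.log_div h.ne' (hupos l).ne', Real.log_div h.ne' (hp l).ne',
          Real.log_div h.ne' (hq l).ne', hu]
        simp only
        rw [Real.log_mul (Real.rpow_pos_of_pos (hp l) _).ne'
          (Real.rpow_pos_of_pos (hq l) _).ne',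
          Real.log_rpow (hp l), Real.log_rpow (hq l)]
        ring
    have hZeq : ∑ l, u l = Z t₀ := rfl
    rw [hZeq] at hgibbs
    have hmaxc : (1 - t₀) * klDisc r' p + t₀ * klDisc r' q
        ≤ max (klDisc r' p) (klDisc r' q) := by
      have h1 : klDisc r' p ≤ max (klDisc r' p) (klDisc r' q) := le_max_left _ _
      have h2 : klDisc r' q ≤ max (klDisc r' p) (klDisc r' q) := le_max_right _ _
      nlinarith [ht₀Ioo.1, ht₀Ioo.2]
    calc g t₀ ≤ ∑ l, r' l * Real.log (r' l / u l) := hgibbs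
      _ = (1 - t₀) * klDisc r' p + t₀ * klDisc r' q := hdecomp
      _ ≤ max (klDisc r' p) (klDisc r' q) := hmaxc
  have hA : IsLeast {x : ℝ | ∃ r : Fin (L + 1) → ℝ, (∀ l, 0 ≤ r l) ∧ (∑ l, r l = 1) ∧
      x = max (klDisc r p) (klDisc r q)} (g t₀) := by
    constructor
    · exact ⟨r, hrnn, hrsum, by rw [hKLp, hKLq, max_self]⟩
    · rintro x ⟨r', h1, h2, rfl⟩
      exact hcombo r' h1 h2
  have hB : IsGreatest {x : ℝ | ∃ t ∈ Set.Icc (0 : ℝ) 1,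
      x = -Real.log (∑ l, p l ^ (1 - t) * q l ^ t)} (g t₀) := by
    constructor
    · exact ⟨t₀, ht₀mem, rfl⟩
    · rintro x ⟨t, ht, rfl⟩
      exact hmax t ht
  rw [hA.csInf_eq, hB.csSup_eq]
end
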